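/- Let WC_m denote the cycle graph C_{2m} (m ≥ 3) with one pendant leaf attached to each of its 2m vertices (the fully whiskered 2m-cycle). Then the 2-matching complex M₂(WC_m) is homotopy equivalent to the sphere S^{2m−1}. -/

import Mathlib

noncomputable section

/-- An abstract simplicial complex on vertex type `V` (faces include `∅`). -/
structure AbsSC (V : Type*) where
  faces : Set (Finset V)
  down_closed : ∀ ⦃σ τ : Finset V⦄, σ ∈ faces → τ ⊆ σ → τ ∈ faces

/-- Geometric realization of an abstract simplicial complex on a finite vertex set. -/
def realization {V : Type*} [Fintype V] (K : AbsSC V) : Type _ :=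
  {f : V → ℝ // (∀ v, 0 ≤ f v) ∧ (∑ v, f v) = 1 ∧ ∃ σ ∈ K.faces, ∀ v, f v ≠ 0 → v ∈ σ}

instance {V : Type*} [Fintype V] (K : AbsSC V) : TopologicalSpace (realization K) := by
  unfold realization; infer_instance

/-- The `n`-sphere. -/
def sphereSpace (n : ℕ) : Type := Metric.sphere (0 : EuclideanSpace ℝ (Fin (n+1))) 1

instance (n : ℕ) : TopologicalSpace (sphereSpace n) := by
  unfold sphereSpace; infer_instance

/-- A base point on the `n`-sphere. -/
def basept (n : ℕ) : sphereSpace n :=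
  ⟨EuclideanSpace.single 0 1, by
    simp [sphereSpace, EuclideanSpace.norm_single]⟩

/-- A wedge of `k` copies of the `n`-sphere (one-point union at the base points). -/
def wedgeSpheres (k n : ℕ) : Type :=
  Quot (fun a b : (Σ _ : Fin k, sphereSpace n) ⊕ Unit =>
    b = Sum.inr () ∧ ∃ i : Fin k, a = Sum.inl ⟨i, basept n⟩)

instance (k n : ℕ) : TopologicalSpace (wedgeSpheres k n) := by
  unfold wedgeSpheres; infer_instance

/-- `H` is a 2-matching of `G`: a set of edges of `G` such that every vertex is
incident to at most 2 of them. -/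
def IsTwoMatching {V : Type*} [DecidableEq V] (G : SimpleGraph V) (H : Finset (Sym2 V)) : Prop :=
  ↑H ⊆ G.edgeSet ∧ ∀ v : V, (H.filter (fun e => v ∈ e)).card ≤ 2

/-- `H` is a matching of `G`. -/
def IsMatchingSet {V : Type*} [DecidableEq V] (G : SimpleGraph V) (H : Finset (Sym2 V)) : Prop :=
  ↑H ⊆ G.edgeSet ∧ ∀ v : V, (H.filter (fun e => v ∈ e)).card ≤ 1

/-- The 2-matching complex `M₂(G)`. -/
def M2 {V : Type*} [DecidableEq V] (G : SimpleGraph V) : AbsSC (Sym2 V) where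
  faces := {H | IsTwoMatching G H}
  down_closed := by
    intro σ τ hσ hτ
    exact ⟨fun e he => hσ.1 (hτ he), fun v =>
      le_trans (Finset.card_le_card (Finset.filter_subset_filter _ hτ)) (hσ.2 v)⟩

/-- The matching complex `M₁(G)`. -/
def M1 {V : Type*} [DecidableEq V] (G : SimpleGraph V) : AbsSC (Sym2 V) where
  faces := {H | IsMatchingSet G H}
  down_closed := by
    intro σ τ hσ hτ
    exact ⟨fun e he => hσ.1 (hτ he), fun v =>
      le_trans (Finset.card_le_card (Finset.filter_subset_filter _ hτ)) (hσ.2 v)⟩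

/-- The independence complex of a graph. -/
def IndC {V : Type*} (G : SimpleGraph V) : AbsSC V where
  faces := {S | ∀ a ∈ S, ∀ b ∈ S, ¬ G.Adj a b}
  down_closed := by
    intro σ τ hσ hτ a ha b hb
    exact hσ a (hτ ha) b (hτ hb)


/-- The fully whiskered `N`-cycle: the cycle on `Fin N` (`inl` vertices) with one
pendant leaf (`inr` vertices) attached to each cycle vertex. -/
def whiskeredCycle (N : ℕ) : SimpleGraph (Fin N ⊕ Fin N) :=
  SimpleGraph.fromRel (fun a b =>
    match a, b with
    | Sum.inl i, Sum.inl j =>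
        (j : ℕ) = (i : ℕ) + 1 ∨ ((i : ℕ) = N - 1 ∧ (j : ℕ) = 0)
    | Sum.inl i, Sum.inr j => i = j
    | _, _ => False)

namespace WhiskerProof

abbrev VV (n : ℕ) := Fin (n+1) ⊕ Fin (n+1)

def cE {n : ℕ} (i : Fin (n+1)) : Sym2 (VV n) := s(Sum.inl i, Sum.inl (i+1))
def wE {n : ℕ} (i : Fin (n+1)) : Sym2 (VV n) := s(Sum.inl i, Sum.inr i)

variable {n : ℕ}

lemma val1 (hn : 2 ≤ n) : ((1 : Fin (n+1)) : ℕ) = 1 := by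
  rw [Fin.val_one']; exact Nat.mod_eq_of_lt (by omega)

lemma one_ne_zero' (hn : 2 ≤ n) : (1 : Fin (n+1)) ≠ 0 := by
  intro h
  have := congrArg Fin.val h
  rw [val1 hn, Fin.val_zero] at this
  exact one_ne_zero this

lemma two_ne_zero' (hn : 2 ≤ n) : (1 + 1 : Fin (n+1)) ≠ 0 := by
  intro h
  have := congrArg Fin.val h
  rw [Fin.add_def] at this
  simp only [val1 hn, Fin.val_zero] at this
  rw [Nat.mod_eq_of_lt (by omega)] at this
  omega

lemma succ_ne_self (hn : 2 ≤ n) (i : Fin (n+1)) : i + 1 ≠ i := by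
  intro h
  have : i + 1 = i + 0 := by rw [add_zero]; exact h
  exact one_ne_zero' hn (add_left_cancel this)

lemma succ_succ_ne_self (hn : 2 ≤ n) (i : Fin (n+1)) : i + 1 + 1 ≠ i := by
  intro h
  rw [add_assoc] at h
  have : i + (1 + 1) = i + 0 := by rw [add_zero]; exact h
  exact two_ne_zero' hn (add_left_cancel this)

lemma rel_iff (hn : 2 ≤ n) (i j : Fin (n+1)) :
    ((j : ℕ) = (i : ℕ) + 1 ∨ ((i : ℕ) = (n+1) - 1 ∧ (j : ℕ) = 0)) ↔ j = i + 1 := by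
  have hadd : ((i + 1 : Fin (n+1)) : ℕ) = ((i : ℕ) + 1) % (n+1) := by
    rw [Fin.add_def]; simp [val1 hn]
  have hi := i.isLt
  have hj := j.isLt
  constructor
  · rintro (h | ⟨h1, h2⟩)
    · apply Fin.ext
      rw [hadd, Nat.mod_eq_of_lt (by omega), h]
    · apply Fin.ext
      rw [hadd, h1]
      have hx : n + 1 - 1 + 1 = n + 1 := by omega
      rw [hx, Nat.mod_self, h2]
  · rintro rfl
    rcases Nat.lt_or_ge ((i : ℕ) + 1) (n+1) with h | h
    · left; rw [hadd, Nat.mod_eq_of_lt h]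
    · right
      have hi' : (i : ℕ) = n := by omega
      constructor
      · omega
      · rw [hadd, hi']
        simp [Nat.mod_self]

lemma adj_inl_inl (hn : 2 ≤ n) (i j : Fin (n+1)) :
    (whiskeredCycle (n+1)).Adj (Sum.inl i) (Sum.inl j) ↔ j = i + 1 ∨ i = j + 1 := by
  rw [whiskeredCycle, SimpleGraph.fromRel_adj]
  simp only [rel_iff hn]
  constructor
  · rintro ⟨-, h⟩; exact h
  · rintro (h | h)
    · refine ⟨?_, Or.inl h⟩
      subst h
      intro hc
      exact succ_ne_self hn i (Sum.inl.inj hc).symm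
    · refine ⟨?_, Or.inr h⟩
      subst h
      intro hc
      exact succ_ne_self hn j (Sum.inl.inj hc)

lemma adj_inl_inr (i j : Fin (n+1)) :
    (whiskeredCycle (n+1)).Adj (Sum.inl i) (Sum.inr j) ↔ i = j := by
  rw [whiskeredCycle, SimpleGraph.fromRel_adj]
  constructor
  · rintro ⟨-, h | h⟩
    · exact h
    · exact h.elim
  · rintro rfl
    exact ⟨by simp, Or.inl rfl⟩

lemma not_adj_inr_inr (i j : Fin (n+1)) :
    ¬ (whiskeredCycle (n+1)).Adj (Sum.inr i) (Sum.inr j) := by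
  rw [whiskeredCycle, SimpleGraph.fromRel_adj]
  rintro ⟨-, h | h⟩ <;> exact h

lemma cE_mem_edgeSet (hn : 2 ≤ n) (i : Fin (n+1)) :
    cE i ∈ (whiskeredCycle (n+1)).edgeSet := by
  rw [cE, SimpleGraph.mem_edgeSet, adj_inl_inl hn]
  exact Or.inl rfl

lemma wE_mem_edgeSet (i : Fin (n+1)) :
    wE i ∈ (whiskeredCycle (n+1)).edgeSet := by
  rw [wE, SimpleGraph.mem_edgeSet, adj_inl_inr]

lemma edge_form (hn : 2 ≤ n) (e : Sym2 (VV n)) (he : e ∈ (whiskeredCycle (n+1)).edgeSet) :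
    ∃ i, e = cE i ∨ e = wE i := by
  induction e with
  | _ a b =>
    rw [SimpleGraph.mem_edgeSet] at he
    match a, b with
    | Sum.inl i, Sum.inl j =>
      rw [adj_inl_inl hn] at he
      rcases he with h | h
      · exact ⟨i, Or.inl (by rw [cE, h])⟩
      · exact ⟨j, Or.inl (by rw [cE, h, Sym2.eq_swap])⟩
    | Sum.inl i, Sum.inr j =>
      rw [adj_inl_inr] at he
      exact ⟨i, Or.inr (by rw [wE, he])⟩
    | Sum.inr i, Sum.inl j =>
      rw [SimpleGraph.adj_comm, adj_inl_inr] at he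
      exact ⟨j, Or.inr (by rw [wE, he, Sym2.eq_swap])⟩
    | Sum.inr i, Sum.inr j => exact absurd he (not_adj_inr_inr i j)

lemma cE_inj (hn : 2 ≤ n) {i j : Fin (n+1)} (h : cE i = cE j) : i = j := by
  rw [cE, cE, Sym2.eq_iff] at h
  rcases h with ⟨h1, -⟩ | ⟨h1, h2⟩
  · exact Sum.inl.inj h1
  · exfalso
    have e1 : i = j + 1 := Sum.inl.inj h1
    have e2 : i + 1 = j := Sum.inl.inj h2
    rw [e1, add_assoc] at e2
    have : j + (1 + 1) = j + 0 := by rw [add_zero]; exact e2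
    exact two_ne_zero' hn (add_left_cancel this)

lemma wE_inj {i j : Fin (n+1)} (h : wE i = wE j) : i = j := by
  rw [wE, wE, Sym2.eq_iff] at h
  rcases h with ⟨h1, -⟩ | ⟨h1, -⟩
  · exact Sum.inl.inj h1
  · exact (Sum.inl_ne_inr h1).elim

lemma cE_ne_wE (i j : Fin (n+1)) : cE i ≠ wE j := by
  intro h
  rw [cE, wE, Sym2.eq_iff] at h
  rcases h with ⟨-, h⟩ | ⟨h, -⟩
  · exact Sum.inl_ne_inr h
  · exact Sum.inl_ne_inr h

lemma mem_cE (v : VV n) (i : Fin (n+1)) : v ∈ cE i ↔ v = Sum.inl i ∨ v = Sum.inl (i+1) :=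
  Sym2.mem_iff

lemma mem_wE (v : VV n) (i : Fin (n+1)) : v ∈ wE i ↔ v = Sum.inl i ∨ v = Sum.inr i :=
  Sym2.mem_iff

/-- Characterization of faces of `M2 (whiskeredCycle (n+1))`. -/
lemma mem_faces_iff (hn : 2 ≤ n) (H : Finset (Sym2 (VV n))) :
    H ∈ (M2 (whiskeredCycle (n+1))).faces ↔
      (∀ e ∈ H, ∃ i, e = cE i ∨ e = wE i) ∧
      (∀ j : Fin (n+1), ¬(cE (j-1) ∈ H ∧ cE j ∈ H ∧ wE j ∈ H)) := by
  constructor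
  · rintro ⟨hsub, hdeg⟩
    constructor
    · intro e he
      exact edge_form hn e (hsub he)
    · rintro j ⟨h1, h2, h3⟩
      have hne12 : cE (j-1) ≠ cE j := by
        intro h
        have := cE_inj hn h
        rw [eq_comm, ← add_left_inj 1, sub_add_cancel] at this
        exact succ_ne_self hn j this
      have h3c : ({cE (j-1), cE j, wE j} : Finset (Sym2 (VV n))).card = 3 := by
        rw [Finset.card_insert_of_notMem, Finset.card_insert_of_notMem,
          Finset.card_singleton]
        · simp only [Finset.mem_singleton]
          exact cE_ne_wE j j
        · simp only [Finset.mem_insert, Finset.mem_singleton]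
          push_neg
          exact ⟨hne12, cE_ne_wE (j-1) j⟩
      have hle : ({cE (j-1), cE j, wE j} : Finset (Sym2 (VV n))).card ≤ 2 := by
        refine le_trans (Finset.card_le_card ?_) (hdeg (Sum.inl j))
        intro e he
        simp only [Finset.mem_insert, Finset.mem_singleton] at he
        refine Finset.mem_filter.2 ?_
        rcases he with rfl | rfl | rfl
        · exact ⟨h1, by rw [mem_cE]; right; rw [sub_add_cancel]⟩
        · exact ⟨h2, by rw [mem_cE]; left; rfl⟩
        · exact ⟨h3, by rw [mem_wE]; left; rfl⟩
      omega
  · rintro ⟨hedge, hT⟩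
    refine ⟨?_, ?_⟩
    · intro e he
      rw [Finset.mem_coe] at he
      obtain ⟨i, h | h⟩ := hedge e he
      · rw [h]; exact cE_mem_edgeSet hn i
      · rw [h]; exact wE_mem_edgeSet i
    · intro v
      match v with
      | Sum.inl j =>
        have key : ∀ F : Finset (Sym2 (VV n)), F ⊆ H →
            (∀ e ∈ F, (Sum.inl j : VV n) ∈ e) → F.card ≤ 2 := by
          intro F hFH hFv
          have hsub : F ⊆ ({cE (j-1), cE j, wE j} : Finset (Sym2 (VV n))) := by
            intro e he
            obtain ⟨i, h | h⟩ := hedge e (hFH he)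
            · subst h
              have hev := hFv _ he
              rw [mem_cE] at hev
              simp only [Finset.mem_insert, Finset.mem_singleton]
              rcases hev with h | h
              · right; left
                rw [Sum.inl.inj h]
              · left
                have hji : i + 1 = j := (Sum.inl.inj h).symm
                rw [← hji, add_sub_cancel_right]
            · subst h
              have hev := hFv _ he
              rw [mem_wE] at hev
              simp only [Finset.mem_insert, Finset.mem_singleton]
              rcases hev with h | h
              · right; right; rw [Sum.inl.inj h]
              · exact (Sum.inl_ne_inr h).elim
          by_contra hc
          push_neg at hc
          have hc3 : ({cE (j-1), cE j, wE j} : Finset (Sym2 (VV n))).card ≤ 3 := by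
            apply le_trans (Finset.card_insert_le _ _)
            have h1 := Finset.card_insert_le (cE j) ({wE j} : Finset (Sym2 (VV n)))
            rw [Finset.card_singleton] at h1
            omega
          have heq := Finset.eq_of_subset_of_card_le hsub (by omega)
          have hmem : ∀ x ∈ ({cE (j-1), cE j, wE j} : Finset (Sym2 (VV n))), x ∈ H := by
            intro x hx
            rw [← heq] at hx
            exact hFH hx
          refine hT j ⟨?_, ?_, ?_⟩
          · exact hmem _ (by simp)
          · exact hmem _ (by simp)
          · exact hmem _ (by simp)
        exact key _ (Finset.filter_subset _ _) (fun e he => (Finset.mem_filter.1 he).2)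
      | Sum.inr j =>
        have key : ∀ F : Finset (Sym2 (VV n)), F ⊆ H →
            (∀ e ∈ F, (Sum.inr j : VV n) ∈ e) → F.card ≤ 2 := by
          intro F hFH hFv
          have hsub : F ⊆ ({wE j} : Finset (Sym2 (VV n))) := by
            intro e he
            obtain ⟨i, h | h⟩ := hedge e (hFH he)
            · subst h
              have hev := hFv _ he
              rw [mem_cE] at hev
              rcases hev with h | h
              · exact (Sum.inr_ne_inl h).elim
              · exact (Sum.inr_ne_inl h).elim
            · subst h
              have hev := hFv _ he
              rw [mem_wE] at hev
              rcases hev with h | h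
              · exact (Sum.inr_ne_inl h).elim
              · simp [Sum.inr.inj h]
          have := Finset.card_le_card hsub
          rw [Finset.card_singleton] at this
          omega
        exact key _ (Finset.filter_subset _ _) (fun e he => (Finset.mem_filter.1 he).2)


/-! ### Real arithmetic helpers -/

def pp (r : ℝ) : ℝ := max r 0
def np (r : ℝ) : ℝ := max (-r) 0

lemma pp_nonneg (r : ℝ) : 0 ≤ pp r := le_max_right _ _
lemma np_nonneg (r : ℝ) : 0 ≤ np r := le_max_right _ _
lemma pp_of_nonpos {r : ℝ} (h : r ≤ 0) : pp r = 0 := max_eq_right h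
lemma pp_of_nonneg {r : ℝ} (h : 0 ≤ r) : pp r = r := max_eq_left h
lemma np_of_nonneg {r : ℝ} (h : 0 ≤ r) : np r = 0 := max_eq_right (by linarith)
lemma np_of_nonpos {r : ℝ} (h : r ≤ 0) : np r = -r := max_eq_left (by linarith)
lemma pp_pos {r : ℝ} (h : 0 < r) : 0 < pp r := lt_max_of_lt_left h
lemma np_pos {r : ℝ} (h : r < 0) : 0 < np r := lt_max_of_lt_left (by linarith)
lemma pos_of_pp {r : ℝ} (h : pp r ≠ 0) : 0 < r := by
  rcases le_or_gt r 0 with h' | h'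
  · exact absurd (pp_of_nonpos h') h
  · exact h'
lemma neg_of_np {r : ℝ} (h : np r ≠ 0) : r < 0 := by
  rcases le_or_gt 0 r with h' | h'
  · exact absurd (np_of_nonneg h') h
  · exact h'
lemma pp_div {r s : ℝ} (hs : 0 < s) : pp (r / s) = pp r / s := by
  rcases le_or_gt r 0 with h | h
  · rw [pp_of_nonpos h, pp_of_nonpos (div_nonpos_of_nonpos_of_nonneg h hs.le), zero_div]
  · rw [pp_of_nonneg h.le, pp_of_nonneg (div_nonneg h.le hs.le)]
lemma np_div {r s : ℝ} (hs : 0 < s) : np (r / s) = np r / s := by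
  rcases le_or_gt r 0 with h | h
  · rw [np_of_nonpos h, np_of_nonpos (div_nonpos_of_nonpos_of_nonneg h hs.le), neg_div]
  · rw [np_of_nonneg h.le, np_of_nonneg (div_nonneg h.le hs.le), zero_div]
lemma pp_add_np_pos {r : ℝ} (h : r ≠ 0) : 0 < pp r + np r := by
  rcases lt_or_gt_of_ne h with h' | h'
  · have := np_pos h'
    have := pp_nonneg r
    linarith
  · have := pp_pos h'
    have := np_nonneg r
    linarith
lemma min_pp_np (r : ℝ) : min (pp r) (np r) = 0 := by
  rcases le_or_gt 0 r with h | h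
  · rw [np_of_nonneg h]
    exact min_eq_right (pp_nonneg r)
  · rw [pp_of_nonpos h.le]
    exact min_eq_left (np_nonneg r)
lemma pp_smul {k r : ℝ} (hk : 0 < k) : pp (k * r) = k * pp r := by
  rcases le_or_gt r 0 with h | h
  · rw [pp_of_nonpos h, pp_of_nonpos (mul_nonpos_of_nonneg_of_nonpos hk.le h), mul_zero]
  · rw [pp_of_nonneg h.le, pp_of_nonneg (mul_nonneg hk.le h.le)]
lemma np_smul {k r : ℝ} (hk : 0 < k) : np (k * r) = k * np r := by
  rcases le_or_gt r 0 with h | h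
  · rw [np_of_nonpos h, np_of_nonpos (mul_nonpos_of_nonneg_of_nonpos hk.le h)]
    ring
  · rw [np_of_nonneg h.le, np_of_nonneg (mul_nonneg hk.le h.le), mul_zero]

/-! ### The sphere map coordinates -/

variable {n : ℕ}

def Af (f : Sym2 (VV n) → ℝ) (i : Fin (n+1)) : ℝ := f (cE i)
def Bf (f : Sym2 (VV n) → ℝ) (i : Fin (n+1)) : ℝ := f (wE i)

/-- The coordinates of the map to the sphere. -/
def Uf (f : Sym2 (VV n) → ℝ) (i : Fin (n+1)) : ℝ :=
  pp (Af f i - Bf f i) - Bf f (i+1) - min (Af f (i-1)) (Bf f i) * pp (Bf f i - Af f i)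

/-- Support of `f` is a 2-matching: no triple is fully positive. -/
def TFree (f : Sym2 (VV n) → ℝ) : Prop :=
  ∀ j : Fin (n+1), Af f (j-1) = 0 ∨ Af f j = 0 ∨ Bf f j = 0

lemma R1 {f : Sym2 (VV n) → ℝ} (h0 : ∀ e, 0 ≤ f e) {i : Fin (n+1)}
    (h : 0 < Uf f i) : Bf f i < Af f i := by
  have hB1 : 0 ≤ Bf f (i+1) := h0 _
  have hmin : 0 ≤ min (Af f (i-1)) (Bf f i) := le_min (h0 _) (h0 _)
  have hprod : 0 ≤ min (Af f (i-1)) (Bf f i) * pp (Bf f i - Af f i) :=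
    mul_nonneg hmin (pp_nonneg _)
  have hpp : 0 < pp (Af f i - Bf f i) := by
    unfold Uf at h
    linarith
  have := pos_of_pp (ne_of_gt hpp)
  linarith

lemma R2 {f : Sym2 (VV n) → ℝ} (h0 : ∀ e, 0 ≤ f e) (hT : TFree f) {i : Fin (n+1)}
    (hA : 0 < Af f i) (hA1 : 0 < Af f (i+1)) : 0 ≤ Uf f i := by
  have hB1 : Bf f (i+1) = 0 := by
    rcases hT (i+1) with h | h | h
    · rw [add_sub_cancel_right] at h
      exact absurd h (ne_of_gt hA)
    · exact absurd h (ne_of_gt hA1)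
    · exact h
  unfold Uf
  rw [hB1]
  rcases le_or_gt (Bf f i) (Af f i) with h | h
  · rw [pp_of_nonpos (by linarith : Bf f i - Af f i ≤ 0)]
    have : 0 ≤ pp (Af f i - Bf f i) := pp_nonneg _
    linarith
  · have hBpos : 0 < Bf f i := lt_of_le_of_lt (h0 _) h  -- 0 ≤ A < B
    have hA0 : Af f (i-1) = 0 := by
      rcases hT i with h' | h' | h'
      · exact h'
      · exact absurd h' (ne_of_gt hA)
      · exact absurd h' (ne_of_gt hBpos)
    rw [hA0]
    have hmin : min (0:ℝ) (Bf f i) = 0 := min_eq_left (h0 _)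
    rw [hmin, zero_mul, pp_of_nonpos (by linarith : Af f i - Bf f i ≤ 0)]
    linarith

lemma R3 {f : Sym2 (VV n) → ℝ} (h0 : ∀ e, 0 ≤ f e) (hT : TFree f)
    (hedge : ∀ e, f e ≠ 0 → ∃ i, e = cE i ∨ e = wE i)
    (hsum : ∑ e, f e = 1) : ∃ i, Uf f i ≠ 0 := by
  by_contra hU
  push_neg at hU
  -- Step 0 : if A (k-1) = 0 then B k = 0
  have step0 : ∀ k : Fin (n+1), Af f (k-1) = 0 → Bf f k = 0 := by
    intro k hA
    have h := hU (k-1)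
    unfold Uf at h
    rw [hA] at h
    rw [sub_add_cancel] at h
    have hpp0 : pp (0 - Bf f (k-1)) = 0 := pp_of_nonpos (by
      have := h0 (wE (k-1)); unfold Bf; linarith)
    rw [hpp0] at h
    have hprod : 0 ≤ min (Af f (k-1-1)) (Bf f (k-1)) * pp (Bf f (k-1) - 0) :=
      mul_nonneg (le_min (h0 _) (h0 _)) (pp_nonneg _)
    have hBk : 0 ≤ Bf f k := h0 _
    linarith
  -- Step 1 : all B vanish
  have step1 : ∀ k : Fin (n+1), Bf f k = 0 := by
    intro k
    by_contra hB
    have hBpos : 0 < Bf f k := lt_of_le_of_ne (h0 _) (Ne.symm hB)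
    have hA0 : Af f (k-1) = 0 := by
      rcases le_or_gt (Bf f k) (Af f k) with hcase | hcase
      · have hApos : 0 < Af f k := lt_of_lt_of_le hBpos hcase
        rcases hT k with h' | h' | h'
        · exact h'
        · exact absurd h' (ne_of_gt hApos)
        · exact absurd h' (ne_of_gt hBpos)
      · have h := hU k
        unfold Uf at h
        rw [pp_of_nonpos (by linarith : Af f k - Bf f k ≤ 0)] at h
        have hB1 : 0 ≤ Bf f (k+1) := h0 _
        have hmin : 0 ≤ min (Af f (k-1)) (Bf f k) := le_min (h0 _) (h0 _)
        have hppos : 0 < pp (Bf f k - Af f k) := pp_pos (by linarith)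
        have hprod0 : min (Af f (k-1)) (Bf f k) * pp (Bf f k - Af f k) = 0 := by
          nlinarith [mul_nonneg hmin (pp_nonneg (Bf f k - Af f k))]
        have hmin0 : min (Af f (k-1)) (Bf f k) = 0 := by
          rcases mul_eq_zero.1 hprod0 with h'' | h''
          · exact h''
          · exact absurd h'' (ne_of_gt hppos)
        rcases min_eq_iff.1 hmin0 with ⟨h'', -⟩ | ⟨h'', -⟩
        · exact h''
        · exact absurd h'' hB
    exact hB (step0 k hA0)
  -- Step 2 : all A vanish
  have step2 : ∀ i : Fin (n+1), Af f i = 0 := by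
    intro i
    have h := hU i
    unfold Uf at h
    rw [step1 i, step1 (i+1)] at h
    have hAnn : 0 ≤ Af f i := h0 _
    rw [pp_of_nonpos (by linarith : (0:ℝ) - Af f i ≤ 0)] at h
    rw [pp_of_nonneg (by linarith : (0:ℝ) ≤ Af f i - 0)] at h
    rw [mul_zero] at h
    linarith
  -- conclude
  have hzero : ∀ e, f e = 0 := by
    intro e
    by_contra hfe
    obtain ⟨i, h | h⟩ := hedge e hfe
    · subst h
      exact hfe (step2 i)
    · subst h
      exact hfe (step1 i)
  rw [Finset.sum_congr rfl (fun e _ => hzero e)] at hsum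
  simp at hsum

/-- Key nonvanishing lemma for the sphere-side homotopy. -/
lemma Zlemma (x : Fin (n+1) → ℝ) (α β : ℝ) (hα : 0 ≤ α) (hβ : 0 ≤ β) (hαβ : 0 < α + β)
    (h : ∀ i, α * x i + β * (pp (pp (x i) - np (x (i-1))) - np (x i)) = 0) :
    ∀ i, x i = 0 := by
  have step1 : ∀ i, 0 ≤ x i := by
    intro i
    by_contra hx
    push_neg at hx
    have h1 : pp (x i) = 0 := pp_of_nonpos hx.le
    have h2 : np (x i) = -x i := np_of_nonpos hx.le
    have h3 : pp (pp (x i) - np (x (i-1))) = 0 := by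
      rw [h1]
      exact pp_of_nonpos (by have := np_nonneg (x (i-1)); linarith)
    have h4 := h i
    rw [h3, h2] at h4
    have : (α + β) * x i = 0 := by ring_nf; ring_nf at h4; linarith
    have := mul_eq_zero.1 this
    rcases this with h' | h'
    · exact absurd h' (ne_of_gt hαβ)
    · exact absurd h' (ne_of_lt hx)
  intro i
  have h1 : np (x (i-1)) = 0 := np_of_nonneg (step1 _)
  have h2 : np (x i) = 0 := np_of_nonneg (step1 _)
  have h3 : pp (pp (x i) - np (x (i-1))) = x i := by
    rw [h1, sub_zero, pp_of_nonneg (pp_nonneg _), pp_of_nonneg (step1 i)]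
  have h4 := h i
  rw [h3, h2] at h4
  have : (α + β) * x i = 0 := by ring_nf; ring_nf at h4; linarith
  rcases mul_eq_zero.1 this with h' | h'
  · exact absurd h' (ne_of_gt hαβ)
  · exact h'


/-! ### Spaces and basic maps -/

abbrev EE (n : ℕ) := EuclideanSpace ℝ (Fin (n+1))
abbrev XX (n : ℕ) := realization (M2 (whiskeredCycle (n+1)))

def valS {n : ℕ} (x : sphereSpace n) : EE n :=
  (show ↥(Metric.sphere (0 : EE n) 1) from x).1

lemma valS_norm {n : ℕ} (x : sphereSpace n) : ‖valS x‖ = 1 :=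
  mem_sphere_zero_iff_norm.1 (show ↥(Metric.sphere (0 : EE n) 1) from x).2

lemma valS_ne {n : ℕ} (x : sphereSpace n) : valS x ≠ 0 := by
  intro h
  have h2 := valS_norm x
  rw [h, norm_zero] at h2
  exact zero_ne_one h2

def mkS {n : ℕ} (y : EE n) (hy : ‖y‖ = 1) : sphereSpace n :=
  show ↥(Metric.sphere (0 : EE n) 1) from ⟨y, mem_sphere_zero_iff_norm.2 hy⟩

lemma valS_mkS {n : ℕ} (y : EE n) (hy : ‖y‖ = 1) : valS (mkS y hy) = y := rfl

lemma mkS_inj {n : ℕ} {y z : EE n} (hy : ‖y‖ = 1) (hz : ‖z‖ = 1) (h : y = z) :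
    mkS y hy = mkS z hz := by
  subst h; rfl

lemma cont_valS {n : ℕ} : Continuous fun x : sphereSpace n => valS x :=
  continuous_subtype_val

lemma cont_coordS {n : ℕ} (i : Fin (n+1)) :
    Continuous fun x : sphereSpace n => valS x i :=
  (continuous_apply i).comp ((PiLp.continuous_ofLp 2 _).comp cont_valS)

def uE {n : ℕ} (f : Sym2 (VV n) → ℝ) : EE n := (WithLp.equiv 2 _).symm (fun i => Uf f i)

lemma uE_apply {n : ℕ} (f : Sym2 (VV n) → ℝ) (i : Fin (n+1)) : uE f i = Uf f i := rfl

lemma cont_coordX {n : ℕ} (e : Sym2 (VV n)) : Continuous fun x : XX n => x.1 e :=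
  (continuous_apply e).comp continuous_subtype_val

lemma cont_uE {n : ℕ} : Continuous fun x : XX n => uE x.1 := by
  apply (PiLp.continuous_toLp 2 (fun _ : Fin (n+1) => ℝ)).comp
  apply continuous_pi
  intro i
  show Continuous fun x : XX n => Uf x.1 i
  unfold Uf Af Bf pp
  exact (((((cont_coordX (cE i)).sub (cont_coordX (wE i))).max continuous_const).sub
    (cont_coordX (wE (i+1)))).sub
    (((cont_coordX (cE (i-1))).min (cont_coordX (wE i))).mul
      (((cont_coordX (wE i)).sub (cont_coordX (cE i))).max continuous_const)))

def Smap {n : ℕ} (y : EE n) : ℝ := ∑ i, (pp (y i) + np (y i))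

lemma Smap_pos {n : ℕ} {y : EE n} (hy : y ≠ 0) : 0 < Smap y := by
  have hex : ∃ i, y i ≠ 0 := by
    by_contra hc
    push_neg at hc
    exact hy (PiLp.ext hc)
  obtain ⟨i, hi⟩ := hex
  refine Finset.sum_pos' (fun j _ => ?_) ⟨i, Finset.mem_univ i, pp_add_np_pos hi⟩
  have := pp_nonneg (y j); have := np_nonneg (y j); linarith

def psiFun {n : ℕ} (y : EE n) : Sym2 (VV n) → ℝ :=
  fun e => (∑ i, ((if e = cE i then pp (y i) else 0) + (if e = wE (i+1) then np (y i) else 0)))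
    / Smap y

lemma psiFun_nonneg {n : ℕ} {y : EE n} (hy : y ≠ 0) (e : Sym2 (VV n)) : 0 ≤ psiFun y e := by
  apply div_nonneg _ (Smap_pos hy).le
  apply Finset.sum_nonneg
  intro i _
  have h1 : (0:ℝ) ≤ if e = cE i then pp (y i) else 0 := by
    split
    · exact pp_nonneg _
    · exact le_rfl
  have h2 : (0:ℝ) ≤ if e = wE (i+1) then np (y i) else 0 := by
    split
    · exact np_nonneg _
    · exact le_rfl
  linarith

lemma psiFun_c {n : ℕ} (hn : 2 ≤ n) (y : EE n) (k : Fin (n+1)) :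
    psiFun y (cE k) = pp (y k) / Smap y := by
  unfold psiFun
  congr 1
  rw [Finset.sum_add_distrib]
  have h1 : ∀ i : Fin (n+1), (if (cE k : Sym2 (VV n)) = cE i then pp (y i) else 0) =
      (if k = i then pp (y i) else 0) := by
    intro i
    congr 1
    simp only [eq_iff_iff]
    constructor
    · exact fun hc => cE_inj hn hc
    · rintro rfl; rfl
  have h2 : ∀ i : Fin (n+1), (if (cE k : Sym2 (VV n)) = wE (i+1) then np (y i) else 0) = 0 := by
    intro i
    rw [if_neg (cE_ne_wE k (i+1))]
  rw [Finset.sum_congr rfl (fun i _ => h1 i), Finset.sum_congr rfl (fun i _ => h2 i)]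
  rw [Finset.sum_ite_eq, if_pos (Finset.mem_univ k), Finset.sum_const_zero, add_zero]

lemma psiFun_w {n : ℕ} (hn : 2 ≤ n) (y : EE n) (k : Fin (n+1)) :
    psiFun y (wE k) = np (y (k-1)) / Smap y := by
  unfold psiFun
  congr 1
  rw [Finset.sum_add_distrib]
  have h1 : ∀ i : Fin (n+1), (if (wE k : Sym2 (VV n)) = cE i then pp (y i) else 0) = 0 := by
    intro i
    rw [if_neg (fun hc => cE_ne_wE i k hc.symm)]
  have h2 : ∀ i : Fin (n+1), (if (wE k : Sym2 (VV n)) = wE (i+1) then np (y i) else 0) =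
      (if k - 1 = i then np (y i) else 0) := by
    intro i
    congr 1
    simp only [eq_iff_iff]
    constructor
    · intro hc
      have := wE_inj hc
      rw [this, add_sub_cancel_right]
    · rintro rfl
      rw [sub_add_cancel]
  rw [Finset.sum_congr rfl (fun i _ => h1 i), Finset.sum_congr rfl (fun i _ => h2 i)]
  rw [Finset.sum_ite_eq, if_pos (Finset.mem_univ (k-1)), Finset.sum_const_zero, zero_add]

lemma psiFun_sum {n : ℕ} {y : EE n} (hy : y ≠ 0) : ∑ e, psiFun y e = 1 := by
  unfold psiFun
  rw [← Finset.sum_div]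
  rw [Finset.sum_comm]
  have h : ∀ i : Fin (n+1),
      (∑ e : Sym2 (VV n), ((if e = cE i then pp (y i) else 0)
        + (if e = wE (i+1) then np (y i) else 0))) = pp (y i) + np (y i) := by
    intro i
    rw [Finset.sum_add_distrib, Finset.sum_ite_eq', if_pos (Finset.mem_univ _),
      Finset.sum_ite_eq', if_pos (Finset.mem_univ _)]
  rw [Finset.sum_congr rfl (fun i _ => h i)]
  exact div_self (ne_of_gt (Smap_pos hy))

lemma psiFun_edge {n : ℕ} (y : EE n) (e : Sym2 (VV n)) (he : psiFun y e ≠ 0) :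
    ∃ i, e = cE i ∨ e = wE i := by
  unfold psiFun at he
  have hnum : (∑ i, ((if e = cE i then pp (y i) else 0)
      + (if e = wE (i+1) then np (y i) else 0))) ≠ 0 := by
    intro hc
    rw [hc, zero_div] at he
    exact he rfl
  obtain ⟨i, -, hi⟩ := Finset.exists_ne_zero_of_sum_ne_zero hnum
  by_cases h1 : e = cE i
  · exact ⟨i, Or.inl h1⟩
  by_cases h2 : e = wE (i+1)
  · exact ⟨i+1, Or.inr h2⟩
  rw [if_neg h1, if_neg h2, add_zero] at hi
  exact absurd rfl hi

lemma psiFun_TFree {n : ℕ} (hn : 2 ≤ n) (y : EE n) : TFree (psiFun y) := by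
  intro j
  by_cases h : psiFun y (cE (j-1)) = 0
  · exact Or.inl h
  · right; right
    show psiFun y (wE j) = 0
    rw [psiFun_w hn]
    rw [psiFun_c hn] at h
    have hpp : pp (y (j-1)) ≠ 0 := by
      intro hc
      rw [hc, zero_div] at h
      exact h rfl
    have := pos_of_pp hpp
    rw [np_of_nonneg this.le, zero_div]

lemma Upsi {n : ℕ} (hn : 2 ≤ n) {y : EE n} (hy : y ≠ 0) (i : Fin (n+1)) :
    Uf (psiFun y) i = (pp (pp (y i) - np (y (i-1))) - np (y i)) / Smap y := by
  have hS := Smap_pos hy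
  unfold Uf
  have hA : Af (psiFun y) i = pp (y i) / Smap y := psiFun_c hn y i
  have hA1 : Af (psiFun y) (i-1) = pp (y (i-1)) / Smap y := psiFun_c hn y (i-1)
  have hB : Bf (psiFun y) i = np (y (i-1)) / Smap y := psiFun_w hn y i
  have hB1 : Bf (psiFun y) (i+1) = np (y i) / Smap y := by
    rw [show Bf (psiFun y) (i+1) = psiFun y (wE (i+1)) from rfl, psiFun_w hn,
      add_sub_cancel_right]
  rw [hA, hA1, hB, hB1]
  rw [div_sub_div_same, pp_div hS]
  have hmin : min (pp (y (i-1)) / Smap y) (np (y (i-1)) / Smap y) = 0 := by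
    rw [min_div_div_right hS.le, min_pp_np, zero_div]
  rw [hmin, zero_mul, sub_zero, div_sub_div_same]

/-! ### Properties of realization points -/

lemma x_nonneg {n : ℕ} (x : XX n) : ∀ e, 0 ≤ x.1 e := x.2.1

lemma x_sum {n : ℕ} (x : XX n) : ∑ e, x.1 e = 1 := x.2.2.1

lemma x_edge {n : ℕ} (hn : 2 ≤ n) (x : XX n) :
    ∀ e, x.1 e ≠ 0 → ∃ i, e = cE i ∨ e = wE i := by
  intro e he
  obtain ⟨σ, hσ, hsupp⟩ := x.2.2.2
  exact ((mem_faces_iff hn σ).1 hσ).1 e (hsupp e he)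

lemma x_TFree {n : ℕ} (hn : 2 ≤ n) (x : XX n) : TFree x.1 := by
  intro j
  obtain ⟨σ, hσ, hsupp⟩ := x.2.2.2
  by_contra hc
  push_neg at hc
  obtain ⟨h1, h2, h3⟩ := hc
  exact ((mem_faces_iff hn σ).1 hσ).2 j ⟨hsupp _ h1, hsupp _ h2, hsupp _ h3⟩

lemma uE_ne {n : ℕ} (hn : 2 ≤ n) (x : XX n) : uE x.1 ≠ 0 := by
  intro h
  obtain ⟨i, hi⟩ := R3 (x_nonneg x) (x_TFree hn x) (x_edge hn x) (x_sum x)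
  apply hi
  have h2 : Uf x.1 i = uE x.1 i := rfl
  rw [h2, h]
  rfl

lemma exists_face {n : ℕ} (hn : 2 ≤ n) (f : Sym2 (VV n) → ℝ)
    (hedge : ∀ e, f e ≠ 0 → ∃ i, e = cE i ∨ e = wE i) (hT : TFree f) :
    ∃ σ ∈ (M2 (whiskeredCycle (n+1))).faces, ∀ e, f e ≠ 0 → e ∈ σ := by
  classical
  refine ⟨Finset.univ.filter (fun e => f e ≠ 0), ?_, ?_⟩
  · rw [mem_faces_iff hn]
    constructor
    · intro e he
      exact hedge e (Finset.mem_filter.1 he).2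
    · rintro j ⟨h1, h2, h3⟩
      rcases hT j with h | h | h
      · exact (Finset.mem_filter.1 h1).2 h
      · exact (Finset.mem_filter.1 h2).2 h
      · exact (Finset.mem_filter.1 h3).2 h
  · intro e he
    exact Finset.mem_filter.2 ⟨Finset.mem_univ _, he⟩

/-! ### The continuous maps Phi and Psi -/

def phiVal {n : ℕ} (x : XX n) : EE n := ‖uE x.1‖⁻¹ • uE x.1

lemma norm_uE_inv_pos {n : ℕ} (hn : 2 ≤ n) (x : XX n) : 0 < ‖uE x.1‖⁻¹ :=
  inv_pos.2 (norm_pos_iff.2 (uE_ne hn x))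

lemma phiVal_norm {n : ℕ} (hn : 2 ≤ n) (x : XX n) : ‖phiVal x‖ = 1 := by
  unfold phiVal
  rw [norm_smul, norm_inv, norm_norm]
  exact inv_mul_cancel₀ (norm_ne_zero_iff.2 (uE_ne hn x))

lemma phiVal_ne {n : ℕ} (hn : 2 ≤ n) (x : XX n) : phiVal x ≠ 0 := by
  intro h
  have h2 := phiVal_norm hn x
  rw [h, norm_zero] at h2
  exact zero_ne_one h2

lemma phiVal_apply {n : ℕ} (x : XX n) (i : Fin (n+1)) :
    phiVal x i = ‖uE x.1‖⁻¹ * Uf x.1 i := by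
  unfold phiVal
  rw [PiLp.smul_apply, uE_apply]
  rfl

def PhiC {n : ℕ} (hn : 2 ≤ n) : C(XX n, sphereSpace n) where
  toFun x := mkS (phiVal x) (phiVal_norm hn x)
  continuous_toFun := by
    apply Continuous.subtype_mk
    exact (cont_uE.norm.inv₀ (fun x => norm_ne_zero_iff.2 (uE_ne hn x))).smul cont_uE

def PsiC {n : ℕ} (hn : 2 ≤ n) : C(sphereSpace n, XX n) where
  toFun x := ⟨psiFun (valS x), psiFun_nonneg (valS_ne x), psiFun_sum (valS_ne x),
    exists_face hn _ (psiFun_edge (valS x)) (psiFun_TFree hn (valS x))⟩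
  continuous_toFun := by
    apply Continuous.subtype_mk
    apply continuous_pi
    intro e
    show Continuous fun x : sphereSpace n => psiFun (valS x) e
    unfold psiFun
    apply Continuous.div
    · apply continuous_finset_sum
      intro i _
      apply Continuous.add
      · by_cases h : e = cE i
        · simp only [if_pos h]
          exact ((cont_coordS i).max continuous_const : Continuous fun x => pp (valS x i))
        · simp only [if_neg h]
          exact continuous_const
      · by_cases h : e = wE (i+1)
        · simp only [if_pos h]
          exact ((cont_coordS i).neg.max continuous_const : Continuous fun x => np (valS x i))
        · simp only [if_neg h]
          exact continuous_const
    · apply continuous_finset_sum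
      intro i _
      exact ((cont_coordS i).max continuous_const).add ((cont_coordS i).neg.max continuous_const)
    · intro x
      exact ne_of_gt (Smap_pos (valS_ne x))

lemma PhiC_val {n : ℕ} (hn : 2 ≤ n) (x : XX n) : valS (PhiC hn x) = phiVal x := rfl
lemma PsiC_val {n : ℕ} (hn : 2 ≤ n) (x : sphereSpace n) :
    (PsiC hn x).1 = psiFun (valS x) := rfl

/-! ### The homotopy on the realization side -/

def gmap {n : ℕ} (x : XX n) : Sym2 (VV n) → ℝ := psiFun (phiVal x)

lemma gmap_c_pos {n : ℕ} (hn : 2 ≤ n) (x : XX n) (k : Fin (n+1))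
    (h : gmap x (cE k) ≠ 0) : Bf x.1 k < Af x.1 k := by
  unfold gmap at h
  rw [psiFun_c hn] at h
  have hpp : pp (phiVal x k) ≠ 0 := by
    intro hc
    rw [hc, zero_div] at h
    exact h rfl
  have hpos : 0 < phiVal x k := pos_of_pp hpp
  rw [phiVal_apply] at hpos
  have hc := norm_uE_inv_pos hn x
  have hU : 0 < Uf x.1 k := by nlinarith
  exact R1 (x_nonneg x) hU

lemma gmap_w_neg {n : ℕ} (hn : 2 ≤ n) (x : XX n) (j : Fin (n+1))
    (h : gmap x (wE j) ≠ 0) : Uf x.1 (j-1) < 0 := by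
  unfold gmap at h
  rw [psiFun_w hn] at h
  have hnp : np (phiVal x (j-1)) ≠ 0 := by
    intro hc
    rw [hc, zero_div] at h
    exact h rfl
  have hneg : phiVal x (j-1) < 0 := neg_of_np hnp
  rw [phiVal_apply] at hneg
  have hc := norm_uE_inv_pos hn x
  nlinarith

def combVal {n : ℕ} (t : ℝ) (x : XX n) : Sym2 (VV n) → ℝ :=
  fun e => (1 - t) * gmap x e + t * x.1 e

lemma comb_nonneg {n : ℕ} (hn : 2 ≤ n) {t : ℝ} (h0 : 0 ≤ t) (h1 : t ≤ 1) (x : XX n) :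
    ∀ e, 0 ≤ combVal t x e := by
  intro e
  unfold combVal
  have hg := psiFun_nonneg (phiVal_ne hn x) e
  have hx := x_nonneg x e
  have : (0:ℝ) ≤ 1 - t := by linarith
  unfold gmap
  nlinarith

lemma comb_sum {n : ℕ} (hn : 2 ≤ n) (t : ℝ) (x : XX n) : ∑ e, combVal t x e = 1 := by
  unfold combVal
  rw [Finset.sum_add_distrib, ← Finset.mul_sum, ← Finset.mul_sum]
  rw [show (∑ e, gmap x e) = 1 from psiFun_sum (phiVal_ne hn x), x_sum x]
  ring

lemma comb_parts {n : ℕ} {t : ℝ} {x : XX n} {e : Sym2 (VV n)}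
    (h : combVal t x e ≠ 0) : gmap x e ≠ 0 ∨ x.1 e ≠ 0 := by
  by_contra hc
  push_neg at hc
  apply h
  unfold combVal
  rw [hc.1, hc.2, mul_zero, mul_zero, add_zero]

lemma comb_edge {n : ℕ} (hn : 2 ≤ n) (t : ℝ) (x : XX n) :
    ∀ e, combVal t x e ≠ 0 → ∃ i, e = cE i ∨ e = wE i := by
  intro e he
  rcases comb_parts he with h | h
  · exact psiFun_edge _ e h
  · exact x_edge hn x e h

lemma comb_A_pos {n : ℕ} (hn : 2 ≤ n) {t : ℝ} {x : XX n} (k : Fin (n+1))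
    (h : combVal t x (cE k) ≠ 0) : 0 < Af x.1 k := by
  rcases comb_parts h with h' | h'
  · have := gmap_c_pos hn x k h'
    have hB := x_nonneg x (wE k)
    show (0:ℝ) < x.1 (cE k)
    have : Bf x.1 k < Af x.1 k := this
    unfold Af Bf at this
    linarith
  · exact lt_of_le_of_ne (x_nonneg x _) (Ne.symm h')

lemma comb_TFree {n : ℕ} (hn : 2 ≤ n) {t : ℝ} (x : XX n) : TFree (combVal t x) := by
  intro j
  by_contra hc
  push_neg at hc
  obtain ⟨h1, h2, h3⟩ := hc
  have hA1 : 0 < Af x.1 (j-1) := comb_A_pos hn (j-1) h1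
  have hA2 : 0 < Af x.1 j := comb_A_pos hn j h2
  rcases comb_parts h3 with h' | h'
  · have hU := gmap_w_neg hn x j h'
    have hA2' : 0 < Af x.1 ((j-1)+1) := by rw [sub_add_cancel]; exact hA2
    have := R2 (x_nonneg x) (x_TFree hn x) hA1 hA2'
    linarith
  · rcases x_TFree hn x j with h'' | h'' | h''
    · exact (ne_of_gt hA1) h''
    · exact (ne_of_gt hA2) h''
    · exact h' h''

open unitInterval in
def leftHtpy {n : ℕ} (hn : 2 ≤ n) :
    ContinuousMap.Homotopy ((PsiC hn).comp (PhiC hn)) (ContinuousMap.id (XX n)) where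
  toFun p := ⟨combVal (p.1 : ℝ) p.2,
    comb_nonneg hn (nonneg p.1) (le_one p.1) p.2,
    comb_sum hn _ p.2,
    exists_face hn _ (comb_edge hn _ p.2) (comb_TFree hn p.2)⟩
  continuous_toFun := by
    apply Continuous.subtype_mk
    apply continuous_pi
    intro e
    show Continuous fun p : I × XX n => (1 - (p.1 : ℝ)) * gmap p.2 e + (p.1 : ℝ) * p.2.1 e
    have ht : Continuous fun p : I × XX n => (p.1 : ℝ) :=
      continuous_subtype_val.comp continuous_fst
    have hg : Continuous fun p : I × XX n => gmap p.2 e := by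
      have : Continuous fun x : XX n => ((PsiC hn).comp (PhiC hn) x).1 e :=
        (cont_coordX e).comp ((PsiC hn).comp (PhiC hn)).continuous
      exact this.comp continuous_snd
    have hx : Continuous fun p : I × XX n => p.2.1 e :=
      (cont_coordX e).comp continuous_snd
    exact ((continuous_const.sub ht).mul hg).add (ht.mul hx)
  map_zero_left x := by
    apply Subtype.ext
    funext e
    show (1 - ((0:I) : ℝ)) * gmap x e + ((0:I) : ℝ) * x.1 e = _
    have h0 : ((0:I) : ℝ) = 0 := rfl
    rw [h0]
    ring_nf
    rfl
  map_one_left x := by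
    apply Subtype.ext
    funext e
    show (1 - ((1:I) : ℝ)) * gmap x e + ((1:I) : ℝ) * x.1 e = x.1 e
    have h1 : ((1:I) : ℝ) = 1 := rfl
    rw [h1]
    ring

/-! ### The homotopy on the sphere side -/

open unitInterval in
def vmap {n : ℕ} (p : I × sphereSpace n) : EE n :=
  (1 - (p.1 : ℝ)) • uE (psiFun (valS p.2)) + (p.1 : ℝ) • valS p.2

open unitInterval in
lemma vmap_ne {n : ℕ} (hn : 2 ≤ n) (p : I × sphereSpace n) : vmap p ≠ 0 := by
  intro h
  set y := valS p.2 with hy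
  have hyne : y ≠ 0 := valS_ne p.2
  have hS := Smap_pos hyne
  set t : ℝ := (p.1 : ℝ) with htdef
  have ht0 : 0 ≤ t := nonneg p.1
  have ht1 : t ≤ 1 := le_one p.1
  have hcoord : ∀ i, t * y i + ((1 - t)/Smap y) *
      (pp (pp (y i) - np (y (i-1))) - np (y i)) = 0 := by
    intro i
    have hz : vmap p i = 0 := by rw [h]; rfl
    unfold vmap at hz
    rw [PiLp.add_apply, PiLp.smul_apply, PiLp.smul_apply] at hz
    rw [uE_apply, Upsi hn hyne] at hz
    rw [smul_eq_mul, smul_eq_mul] at hz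
    rw [← hy, ← htdef] at hz
    field_simp at hz ⊢
    linarith
  have hαβ : 0 < t + (1 - t)/Smap y := by
    rcases lt_or_eq_of_le ht0 with h' | h'
    · have : 0 ≤ (1 - t)/Smap y := div_nonneg (by linarith) hS.le
      linarith
    · rw [← h']
      simp only [zero_add, sub_zero]
      positivity
  have := Zlemma y t ((1-t)/Smap y) ht0 (div_nonneg (by linarith) hS.le) hαβ hcoord
  exact hyne (PiLp.ext this)

open unitInterval in
def rightHtpy {n : ℕ} (hn : 2 ≤ n) :
    ContinuousMap.Homotopy ((PhiC hn).comp (PsiC hn)) (ContinuousMap.id (sphereSpace n)) where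
  toFun p := mkS (‖vmap p‖⁻¹ • vmap p) (by
    rw [norm_smul, norm_inv, norm_norm]
    exact inv_mul_cancel₀ (norm_ne_zero_iff.2 (vmap_ne hn p)))
  continuous_toFun := by
    apply Continuous.subtype_mk
    have hv : Continuous fun p : I × sphereSpace n => vmap p := by
      unfold vmap
      have ht : Continuous fun p : I × sphereSpace n => (p.1 : ℝ) :=
        continuous_subtype_val.comp continuous_fst
      have hu : Continuous fun p : I × sphereSpace n => uE (psiFun (valS p.2)) := by
        have h1 : Continuous fun x : sphereSpace n => uE ((PsiC hn x).1) :=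
          cont_uE.comp (PsiC hn).continuous
        exact h1.comp continuous_snd
      have hval : Continuous fun p : I × sphereSpace n => valS p.2 :=
        cont_valS.comp continuous_snd
      exact ((continuous_const.sub ht).smul hu).add (ht.smul hval)
    exact (hv.norm.inv₀ (fun p => norm_ne_zero_iff.2 (vmap_ne hn p))).smul hv
  map_zero_left x := by
    apply Subtype.ext
    show ‖vmap ((0:I), x)‖⁻¹ • vmap ((0:I), x) = _
    have hv : vmap ((0:I), x) = uE (psiFun (valS x)) := by
      unfold vmap
      have h0 : (((0:I), x).1 : ℝ) = 0 := rfl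
      rw [h0]
      rw [sub_zero, one_smul, zero_smul, add_zero]
    rw [hv]
    rfl
  map_one_left x := by
    apply Subtype.ext
    show ‖vmap ((1:I), x)‖⁻¹ • vmap ((1:I), x) = valS x
    have hv : vmap ((1:I), x) = valS x := by
      unfold vmap
      have h1 : (((1:I), x).1 : ℝ) = 1 := rfl
      rw [h1]
      rw [sub_self, zero_smul, one_smul, zero_add]
    rw [hv, valS_norm, inv_one, one_smul]

/-! ### Main result -/

lemma main (n : ℕ) (hn : 2 ≤ n) :
    Nonempty (ContinuousMap.HomotopyEquiv (realization (M2 (whiskeredCycle (n+1))))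
      (sphereSpace n)) :=
  ⟨{ toFun := PhiC hn
     invFun := PsiC hn
     left_inv := ⟨leftHtpy hn⟩
     right_inv := ⟨rightHtpy hn⟩ }⟩

end WhiskerProof

/-- for `m ≥ 3`, the 2-matching complex of the fully whiskered
`2m`-cycle is homotopy equivalent to `S^{2m-1}`. -/
theorem stmt_9 (m : ℕ) (hm : 3 ≤ m) :
    Nonempty (ContinuousMap.HomotopyEquiv (realization (M2 (whiskeredCycle (2 * m))))
      (sphereSpace (2 * m - 1))) := by
  have h2 : 2 ≤ 2 * m - 1 := by omega
  have hmain := WhiskerProof.main (2 * m - 1) h2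
  have he : (2 * m - 1) + 1 = 2 * m := by omega
  rw [he] at hmain
  exact hmain

end
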